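/- For k ≥ 1 set n = 6k and δ = π/n. Then the double product over 1 ≤ i ≤ k and 1 ≤ j ≤ k of cos⁴((i−j)δ − δ/2) / cos⁴((i−j)δ) converges, as k → ∞, to √3/2. -/

import Mathlib

/-- The angle increment `δ = π / (6k)`. -/
noncomputable def dlt (k : ℕ) : ℝ := Real.pi / (6 * k)

open Real Filter Finset


noncomputable def gfun (x : ℝ) : ℝ := (π/6 - x) / Real.cos x ^ 2

lemma sqrt3_gt : (1.7:ℝ) < Real.sqrt 3 := by
  nlinarith [Real.sq_sqrt (by norm_num : (3:ℝ) ≥ 0), Real.sqrt_nonneg 3]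

lemma cos_ge_of_abs_le {x : ℝ} (h : |x| ≤ π/6) : Real.sqrt 3 / 2 ≤ Real.cos x := by
  rw [← Real.cos_abs, ← Real.cos_pi_div_six]
  exact Real.cos_le_cos_of_nonneg_of_le_pi (abs_nonneg x) (by linarith [Real.pi_pos]) h

lemma cos_mul_cos (x h : ℝ) :
    Real.cos (x - h) * Real.cos (x + h) = Real.cos x ^ 2 - Real.sin h ^ 2 := by
  rw [Real.cos_sub, Real.cos_add]
  nlinarith [Real.sin_sq_add_cos_sq x, Real.sin_sq_add_cos_sq h]

lemma gfun_anti : AntitoneOn gfun (Set.Icc 0 (π/6)) := by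
  have hpi := Real.pi_pos
  have hint : interior (Set.Icc (0:ℝ) (π/6)) = Set.Ioo 0 (π/6) := interior_Icc
  have hcosne : ∀ x ∈ Set.Icc (0:ℝ) (π/6), Real.cos x ≠ 0 := by
    intro x hx
    have : Real.sqrt 3 / 2 ≤ Real.cos x := by
      apply cos_ge_of_abs_le
      rw [abs_le]; exact ⟨by linarith [hx.1], hx.2⟩
    nlinarith [sqrt3_gt]
  have hderiv : ∀ x ∈ Set.Ioo (0:ℝ) (π/6), HasDerivAt gfun
      ((-1 * Real.cos x ^ 2 - (π/6 - x) * (2 * Real.cos x ^ 1 * (-Real.sin x))) / (Real.cos x ^ 2) ^ 2) x := by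
    intro x hx
    have hc : Real.cos x ≠ 0 := hcosne x (Set.mem_Icc.2 ⟨hx.1.le, hx.2.le⟩)
    have h1 : HasDerivAt (fun y : ℝ => π/6 - y) (0 - 1) x :=
      (hasDerivAt_const x (π/6)).sub (hasDerivAt_id x)
    have h2 : HasDerivAt (fun y : ℝ => Real.cos y ^ 2) (2 * Real.cos x ^ 1 * (-Real.sin x)) x := by
      simpa using (Real.hasDerivAt_cos x).fun_pow 2
    have := h1.fun_div h2 (pow_ne_zero 2 hc)
    simp at this ⊢; exact this
  apply antitoneOn_of_deriv_nonpos (convex_Icc _ _)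
  · apply ContinuousOn.div
    · exact (continuous_const.sub continuous_id).continuousOn
    · exact (Real.continuous_cos.pow 2).continuousOn
    · intro x hx; exact pow_ne_zero 2 (hcosne x hx)
  · rw [hint]
    intro x hx
    exact ((hderiv x hx).differentiableAt).differentiableWithinAt
  · rw [hint]
    intro x hx
    rw [(hderiv x hx).deriv]
    have hc : Real.sqrt 3 / 2 ≤ Real.cos x := by
      apply cos_ge_of_abs_le
      rw [abs_le]; exact ⟨by linarith [hx.1], by linarith [hx.2]⟩
    have hs1 : Real.sin x < x := Real.sin_lt hx.1
    have hs0 : 0 < Real.sin x := Real.sin_pos_of_pos_of_lt_pi hx.1 (by linarith [hx.2])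
    have hx2 : x < π/6 := hx.2
    have hpl : π < 3.15 := Real.pi_lt_d2
    apply div_nonpos_of_nonpos_of_nonneg
    · have h2 : (0:ℝ) ≤ Real.cos x := by nlinarith [sqrt3_gt]
      have h4 : (0.552:ℝ) ≤ Real.cos x := by nlinarith [sqrt3_gt]
      have h5 : 2*((π/6 - x) * Real.sin x) ≤ 0.552 := by nlinarith [hx.1, hs0.le]
      nlinarith [mul_le_mul_of_nonneg_right h5 h2, mul_le_mul_of_nonneg_right h4 h2]
    · positivity

lemma cos_pos_icc {x : ℝ} (hx : x ∈ Set.Icc (0:ℝ) (π/6)) : 0 < Real.cos x := by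
  have : Real.sqrt 3 / 2 ≤ Real.cos x := by
    apply cos_ge_of_abs_le
    rw [abs_le]; exact ⟨by linarith [hx.1, Real.pi_pos], hx.2⟩
  nlinarith [sqrt3_gt]

lemma gfun_contOn : ContinuousOn gfun (Set.Icc 0 (π/6)) := by
  apply ContinuousOn.div
  · exact (continuous_const.sub continuous_id).continuousOn
  · exact (Real.continuous_cos.pow 2).continuousOn
  · intro x hx; exact pow_ne_zero 2 (ne_of_gt (cos_pos_icc hx))

lemma integral_gfun : ∫ x in (0:ℝ)..(π/6), gfun x = - Real.log (Real.sqrt 3 / 2) := by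
  have hpi := Real.pi_pos
  have huIcc : Set.uIcc (0:ℝ) (π/6) = Set.Icc 0 (π/6) := Set.uIcc_of_le (by linarith)
  have hd : ∀ x ∈ Set.uIcc (0:ℝ) (π/6),
      HasDerivAt (fun y : ℝ => (π/6 - y) * Real.tan y - Real.log (Real.cos y)) (gfun x) x := by
    intro x hx
    rw [huIcc] at hx
    have hc : Real.cos x ≠ 0 := ne_of_gt (cos_pos_icc hx)
    have h1 : HasDerivAt (fun y : ℝ => π/6 - y) (0 - 1) x :=
      (hasDerivAt_const x (π/6)).sub (hasDerivAt_id x)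
    have ht : HasDerivAt Real.tan (1 / Real.cos x ^ 2) x := Real.hasDerivAt_tan hc
    have h2 : HasDerivAt (fun y : ℝ => (π/6 - y) * Real.tan y)
        ((0 - 1) * Real.tan x + (π/6 - x) * (1 / Real.cos x ^ 2)) x := h1.mul ht
    have h3 : HasDerivAt (fun y : ℝ => Real.log (Real.cos y)) (-Real.sin x / Real.cos x) x :=
      (Real.hasDerivAt_cos x).log hc
    have h4 := h2.fun_sub h3
    refine h4.congr_deriv ?_
    rw [Real.tan_eq_sin_div_cos]
    unfold gfun
    field_simp [gfun]
    ring
  have hi : IntervalIntegrable gfun MeasureTheory.volume 0 (π/6) := by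
    rw [intervalIntegrable_iff_integrableOn_Icc_of_le (by linarith)]
    exact gfun_contOn.integrableOn_compact isCompact_Icc
  have key := intervalIntegral.integral_eq_sub_of_hasDerivAt hd hi
  rw [key]
  simp [Real.cos_pi_div_six, Real.tan_zero]



lemma reflect_sum (F : ℝ → ℝ) (k : ℕ) :
    ∑ j ∈ Icc 1 k, F ((k:ℝ) + 1 - (j:ℝ)) = ∑ d ∈ Icc 1 k, F (d:ℝ) := by
  apply Finset.sum_nbij' (fun j => k + 1 - j) (fun d => k + 1 - d)
  · intro a ha; rw [Finset.mem_Icc] at *; omega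
  · intro a ha; rw [Finset.mem_Icc] at *; omega
  · intro a ha; rw [Finset.mem_Icc] at ha; omega
  · intro a ha; rw [Finset.mem_Icc] at ha; omega
  · intro a ha
    rw [Finset.mem_Icc] at ha
    congr 1
    have : ((k + 1 - a : ℕ) : ℝ) = (k:ℝ) + 1 - a := by
      push_cast [Nat.cast_sub (by omega : a ≤ k + 1)]; ring
    rw [this]

lemma diag_sum (F : ℝ → ℝ) (hF : ∀ x, F (-x) = F x) (k : ℕ) :
    ∑ i ∈ Icc 1 k, ∑ j ∈ Icc 1 k, F ((i:ℝ) - (j:ℝ))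
      = k * F 0 + ∑ d ∈ Icc 1 (k-1), 2 * ((k:ℝ) - (d:ℝ)) * F (d:ℝ) := by
  induction k with
  | zero => simp
  | succ k ih =>
    have h1 : ∀ f : ℕ → ℝ, ∑ j ∈ Icc 1 (k+1), f j = ∑ j ∈ Icc 1 k, f j + f (k+1) :=
      fun f => Finset.sum_Icc_succ_top (by omega) f
    have L1 : ∑ i ∈ Icc 1 (k+1), ∑ j ∈ Icc 1 (k+1), F ((i:ℝ) - (j:ℝ))
        = (∑ i ∈ Icc 1 k, ∑ j ∈ Icc 1 k, F ((i:ℝ) - (j:ℝ)))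
          + 2 * (∑ d ∈ Icc 1 k, F (d:ℝ)) + F 0 := by
      rw [h1]
      have inner : ∀ i ∈ Icc 1 k, (∑ j ∈ Icc 1 (k+1), F ((i:ℝ) - (j:ℝ)))
          = (∑ j ∈ Icc 1 k, F ((i:ℝ) - (j:ℝ))) + F ((k:ℝ) + 1 - (i:ℝ)) := by
        intro i _
        rw [h1]
        congr 1
        rw [show ((i:ℝ) - ((k+1:ℕ):ℝ)) = -((k:ℝ) + 1 - (i:ℝ)) by push_cast; ring, hF]
      rw [Finset.sum_congr rfl inner, Finset.sum_add_distrib]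
      have e1 : ∑ i ∈ Icc 1 k, F ((k:ℝ) + 1 - (i:ℝ)) = ∑ d ∈ Icc 1 k, F (d:ℝ) :=
        reflect_sum F k
      have e2 : ∑ j ∈ Icc 1 (k+1), F (((k+1:ℕ):ℝ) - (j:ℝ)) = (∑ d ∈ Icc 1 k, F (d:ℝ)) + F 0 := by
        rw [h1]
        congr 1
        · rw [← e1]
          apply Finset.sum_congr rfl
          intro j _
          congr 1
          push_cast; ring
        · rw [show (((k+1:ℕ):ℝ) - ((k+1:ℕ):ℝ)) = (0:ℝ) by ring]
      rw [e1, e2]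
      ring
    have R1 : ∑ d ∈ Icc 1 k, 2 * (((k+1:ℕ):ℝ) - (d:ℝ)) * F (d:ℝ)
        = (∑ d ∈ Icc 1 (k-1), 2 * ((k:ℝ) - (d:ℝ)) * F (d:ℝ)) + 2 * ∑ d ∈ Icc 1 k, F (d:ℝ) := by
      have step : ∀ d ∈ Icc 1 k, 2 * (((k+1:ℕ):ℝ) - (d:ℝ)) * F (d:ℝ)
          = 2 * ((k:ℝ) - (d:ℝ)) * F (d:ℝ) + 2 * F (d:ℝ) := by
        intro d _; push_cast; ring
      rw [Finset.sum_congr rfl step, Finset.sum_add_distrib, ← Finset.mul_sum]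
      congr 1
      cases k with
      | zero => simp
      | succ m =>
        rw [Finset.sum_Icc_succ_top (by omega : 1 ≤ m + 1)]
        simp
    rw [L1, ih, Nat.add_sub_cancel, R1]
    push_cast
    ring

noncomputable def sig (k : ℕ) : ℝ :=
  ∑ i ∈ Icc 1 k, ∑ j ∈ Icc 1 k, 1 / Real.cos (((i:ℝ) - (j:ℝ)) * dlt k) ^ 2

lemma dlt_pos {k : ℕ} (hk : 1 ≤ k) : 0 < dlt k := by
  have : (0:ℝ) < (k:ℝ) := by exact_mod_cast hk
  unfold dlt
  positivity

lemma dlt_mul_k {k : ℕ} (hk : 1 ≤ k) : (k:ℝ) * dlt k = π/6 := by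
  have : (0:ℝ) < (k:ℝ) := by exact_mod_cast hk
  unfold dlt
  field_simp

lemma dlt_le {k : ℕ} (hk : 1 ≤ k) : dlt k ≤ π/6 := by
  have hk' : (1:ℝ) ≤ (k:ℝ) := by exact_mod_cast hk
  have hpi := Real.pi_pos
  unfold dlt
  rw [div_le_div_iff₀ (by linarith) (by norm_num)]
  nlinarith

lemma sig_eq {k : ℕ} (hk : 1 ≤ k) :
    dlt k ^ 2 * sig k
      = dlt k ^ 2 * k + 2 * ∑ d ∈ Icc 1 (k-1), dlt k * gfun ((d:ℝ) * dlt k) := by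
  have hδ := dlt_pos hk
  have hev : ∀ x : ℝ, 1 / Real.cos (-x * dlt k) ^ 2 = 1 / Real.cos (x * dlt k) ^ 2 := by
    intro x
    rw [neg_mul, Real.cos_neg]
  have := diag_sum (fun x => 1 / Real.cos (x * dlt k) ^ 2) hev k
  unfold sig
  rw [this]
  rw [mul_add, Finset.mul_sum, Finset.mul_sum]
  congr 1
  · simp
  · apply Finset.sum_congr rfl
    intro d hd
    rw [Finset.mem_Icc] at hd
    have hdk : (d:ℝ) ≤ (k:ℝ) := by exact_mod_cast hd.2.trans (Nat.sub_le k 1)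
    have hcc : Real.cos ((d:ℝ) * dlt k) ^ 2 ≠ 0 := by
      apply pow_ne_zero
      apply ne_of_gt
      apply cos_pos_icc
      constructor
      · positivity
      · calc (d:ℝ) * dlt k ≤ (k:ℝ) * dlt k := by
              apply mul_le_mul_of_nonneg_right hdk hδ.le
          _ = π/6 := dlt_mul_k hk
    unfold gfun
    rw [show π/6 - (d:ℝ) * dlt k = ((k:ℝ) - d) * dlt k by rw [← dlt_mul_k hk]; ring]
    field_simp

lemma icc_sum_eq {k : ℕ} (δ : ℝ) :
    ∑ i ∈ Finset.range k, gfun ((((i:ℕ)+1:ℕ):ℝ) * δ) = ∑ d ∈ Icc 1 k, gfun ((d:ℝ) * δ) := by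
  apply Finset.sum_nbij' (fun i => i + 1) (fun d => d - 1)
  · intro a ha; rw [Finset.mem_range] at ha; rw [Finset.mem_Icc]; omega
  · intro a ha; rw [Finset.mem_Icc] at ha; rw [Finset.mem_range]; omega
  · intro a ha; omega
  · intro a ha; rw [Finset.mem_Icc] at ha; omega
  · intro a _; norm_num

lemma Rk_bounds {k : ℕ} (hk : 1 ≤ k) :
    -Real.log (Real.sqrt 3 / 2) - dlt k * (π/6)
        ≤ ∑ d ∈ Icc 1 (k-1), dlt k * gfun ((d:ℝ) * dlt k)
    ∧ ∑ d ∈ Icc 1 (k-1), dlt k * gfun ((d:ℝ) * dlt k) ≤ -Real.log (Real.sqrt 3 / 2) := by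
  have hδ := dlt_pos hk
  set δ := dlt k with hδdef
  have hkδ : (k:ℝ) * δ = π/6 := dlt_mul_k hk
  have hA : AntitoneOn (fun t : ℝ => gfun (t * δ)) (Set.Icc 0 (0 + (k:ℕ))) := by
    intro s hs t ht hst
    simp only [Set.mem_Icc, zero_add] at hs ht
    have hmem : ∀ u : ℝ, 0 ≤ u → u ≤ (k:ℝ) → u * δ ∈ Set.Icc 0 (π/6) := by
      intro u h0 h1
      constructor
      · positivity
      · calc u * δ ≤ (k:ℝ) * δ := mul_le_mul_of_nonneg_right h1 hδ.le
          _ = π/6 := hkδ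
    exact gfun_anti (hmem s hs.1 hs.2) (hmem t ht.1 ht.2)
      (mul_le_mul_of_nonneg_right hst hδ.le)
  have hupper := hA.sum_le_integral
  have hlower := hA.integral_le_sum
  have hint : (∫ x in (0:ℝ)..(0 + (k:ℕ)), gfun (x * δ))
      = δ⁻¹ * (- Real.log (Real.sqrt 3 / 2)) := by
    rw [zero_add]
    rw [intervalIntegral.integral_comp_mul_right gfun (ne_of_gt hδ)]
    rw [zero_mul, hkδ, integral_gfun]
    simp
  -- identify the two sums
  have hg0 : gfun 0 = π/6 := by unfold gfun; simp
  have hgtop : gfun ((k:ℝ) * δ) = 0 := by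
    unfold gfun; rw [hkδ]; simp
  have S1 : (∑ i ∈ Finset.range k, gfun ((0 + ((i:ℕ) + 1 : ℕ)) * δ))
      = ∑ d ∈ Icc 1 (k-1), gfun ((d:ℝ) * δ) := by
    have : (∑ i ∈ Finset.range k, gfun ((0 + ((i:ℕ) + 1 : ℕ)) * δ))
        = ∑ d ∈ Icc 1 k, gfun ((d:ℝ) * δ) := by
      rw [← icc_sum_eq]
      apply Finset.sum_congr rfl
      intro i _
      norm_num
    rw [this]
    obtain ⟨m, rfl⟩ : ∃ m, k = m + 1 := ⟨k - 1, by omega⟩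
    rw [Finset.sum_Icc_succ_top (by omega : 1 ≤ m + 1)]
    have : gfun (((m+1:ℕ):ℝ) * δ) = 0 := by
      rw [show (((m+1:ℕ):ℝ)) = ((m+1:ℕ):ℝ) from rfl]
      exact_mod_cast hgtop
    rw [this]
    simp
  have S2 : (∑ i ∈ Finset.range k, gfun ((0 + (i:ℕ)) * δ))
      = gfun 0 + ∑ d ∈ Icc 1 (k-1), gfun ((d:ℝ) * δ) := by
    obtain ⟨m, rfl⟩ : ∃ m, k = m + 1 := ⟨k - 1, by omega⟩
    rw [Finset.sum_range_succ' (fun i => gfun ((0 + (i:ℕ)) * δ)) m]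
    have : (∑ i ∈ Finset.range m, gfun ((0 + ((i:ℕ)+1:ℕ)) * δ))
        = ∑ d ∈ Icc 1 m, gfun ((d:ℝ) * δ) := by
      rw [← icc_sum_eq]
      apply Finset.sum_congr rfl
      intro i _
      norm_num
    rw [this]
    simp [add_comm]
  rw [S1, hint] at hupper
  rw [S2, hint] at hlower
  have he : δ * (δ⁻¹ * (- Real.log (Real.sqrt 3 / 2))) = - Real.log (Real.sqrt 3 / 2) := by
    field_simp
  constructor
  · have h2 := mul_le_mul_of_nonneg_left hlower hδ.le
    rw [mul_add, Finset.mul_sum, he, hg0] at h2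
    linarith
  · have h2 := mul_le_mul_of_nonneg_left hupper hδ.le
    rw [Finset.mul_sum, he] at h2
    exact h2

lemma dlt_tendsto : Tendsto dlt atTop (nhds 0) := by
  have : dlt = fun k : ℕ => (π/6) / (k:ℝ) := by
    funext k
    unfold dlt
    rw [div_div]
  rw [this]
  exact tendsto_const_div_atTop_nhds_zero_nat (π/6)

lemma riemann :
    Tendsto (fun k => dlt k ^ 2 * sig k) atTop
      (nhds (-2 * Real.log (Real.sqrt 3 / 2))) := by
  have hlo : Tendsto (fun k : ℕ => -2 * Real.log (Real.sqrt 3 / 2) - 2 * (dlt k * (π/6)))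
      atTop (nhds (-2 * Real.log (Real.sqrt 3 / 2))) := by
    have := ((dlt_tendsto.const_mul (π/6)).const_mul 2)
    have h2 := (tendsto_const_nhds (x := -2 * Real.log (Real.sqrt 3 / 2)) (f := atTop (α := ℕ))).sub
      ((dlt_tendsto.mul_const (π/6)).const_mul 2)
    simpa using h2
  have hhi : Tendsto (fun k : ℕ => -2 * Real.log (Real.sqrt 3 / 2) + dlt k * (π/6))
      atTop (nhds (-2 * Real.log (Real.sqrt 3 / 2))) := by
    have h2 := (tendsto_const_nhds (x := -2 * Real.log (Real.sqrt 3 / 2)) (f := atTop (α := ℕ))).add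
      (dlt_tendsto.mul_const (π/6))
    simpa using h2
  apply tendsto_of_tendsto_of_tendsto_of_le_of_le' hlo hhi
  · filter_upwards [eventually_ge_atTop 1] with k hk
    have h := (Rk_bounds hk).1
    have hs := sig_eq hk
    have hδ := dlt_pos hk
    have hδk : dlt k ^ 2 * k = dlt k * (π/6) := by
      rw [show dlt k ^ 2 * (k:ℝ) = dlt k * ((k:ℝ) * dlt k) by ring, dlt_mul_k hk]
    nlinarith [sq_nonneg (dlt k), (show (0:ℝ) ≤ (k:ℝ) from Nat.cast_nonneg k)]
  · filter_upwards [eventually_ge_atTop 1] with k hk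
    have h := (Rk_bounds hk).2
    have hs := sig_eq hk
    have hδk : dlt k ^ 2 * k = dlt k * (π/6) := by
      rw [show dlt k ^ 2 * (k:ℝ) = dlt k * ((k:ℝ) * dlt k) by ring, dlt_mul_k hk]
    nlinarith

noncomputable def Tsum (k : ℕ) : ℝ :=
  ∑ i ∈ Icc 1 k, ∑ j ∈ Icc 1 k,
    2 * Real.log (1 - Real.sin (dlt k / 2) ^ 2 / Real.cos (((i:ℝ) - (j:ℝ)) * dlt k) ^ 2)

lemma cos_shift_ge {k : ℕ} (hk : 1 ≤ k) {i j : ℕ} (hi : i ∈ Icc 1 k) (hj : j ∈ Icc 1 k)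
    (t : ℝ) (ht : |t| ≤ dlt k / 2) :
    Real.sqrt 3 / 2 ≤ Real.cos (((i:ℝ) - (j:ℝ)) * dlt k + t) := by
  have hδ := dlt_pos hk
  rw [Finset.mem_Icc] at hi hj
  have hi1 : (1:ℝ) ≤ (i:ℝ) := by exact_mod_cast hi.1
  have hi2 : (i:ℝ) ≤ (k:ℝ) := by exact_mod_cast hi.2
  have hj1 : (1:ℝ) ≤ (j:ℝ) := by exact_mod_cast hj.1
  have hj2 : (j:ℝ) ≤ (k:ℝ) := by exact_mod_cast hj.2
  apply cos_ge_of_abs_le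
  have habs : |(i:ℝ) - (j:ℝ)| ≤ (k:ℝ) - 1 := by
    rw [abs_le]; constructor <;> linarith
  calc |((i:ℝ) - (j:ℝ)) * dlt k + t| ≤ |((i:ℝ) - (j:ℝ)) * dlt k| + |t| := abs_add_le _ _
    _ = |(i:ℝ) - (j:ℝ)| * dlt k + |t| := by rw [abs_mul, abs_of_pos hδ]
    _ ≤ ((k:ℝ) - 1) * dlt k + dlt k / 2 := by
        have := mul_le_mul_of_nonneg_right habs hδ.le
        linarith
    _ ≤ (k:ℝ) * dlt k := by linarith
    _ = π/6 := dlt_mul_k hk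

lemma sin_half_lt {k : ℕ} (hk : 1 ≤ k) :
    0 < Real.sin (dlt k / 2) ∧ Real.sin (dlt k / 2) < dlt k / 2 := by
  have hδ := dlt_pos hk
  have hle := dlt_le hk
  have hpi := Real.pi_pos
  constructor
  · apply Real.sin_pos_of_pos_of_lt_pi (by linarith)
    linarith
  · exact Real.sin_lt (by linarith)

lemma one_sub_u_pos {k : ℕ} (hk : 1 ≤ k) {c : ℝ} (hc : Real.sqrt 3 / 2 ≤ c) :
    Real.sin (dlt k / 2) ^ 2 / c ^ 2 < 1/2 ∧ 0 ≤ Real.sin (dlt k / 2) ^ 2 / c ^ 2 ∧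
      Real.sin (dlt k / 2) ^ 2 / c ^ 2 ≤ (dlt k) ^ 2 / 3 := by
  have hδ := dlt_pos hk
  have hle := dlt_le hk
  have hpl : π < 3.15 := Real.pi_lt_d2
  have hs := sin_half_lt hk
  have hc0 : (0.85:ℝ) ≤ c := by nlinarith [sqrt3_gt]
  have hc2 : (3:ℝ)/4 ≤ c ^ 2 := by
    nlinarith [Real.sq_sqrt (by norm_num : (3:ℝ) ≥ 0), sqrt3_gt]
  have hs2 : Real.sin (dlt k / 2) ^ 2 ≤ (dlt k / 2) ^ 2 := by nlinarith [hs.1, hs.2]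
  have hδb : dlt k ^ 2 ≤ (π/6) ^ 2 := by nlinarith
  have hu3 : Real.sin (dlt k / 2) ^ 2 / c ^ 2 ≤ (dlt k) ^ 2 / 3 := by
    rw [div_le_div_iff₀ (by linarith) (by norm_num)]
    nlinarith
  refine ⟨?_, by positivity, hu3⟩
  calc Real.sin (dlt k / 2) ^ 2 / c ^ 2 ≤ (dlt k) ^ 2 / 3 := hu3
    _ ≤ (π/6)^2/3 := by linarith
    _ < 1/2 := by nlinarith

lemma prod_eq {k : ℕ} (hk : 1 ≤ k) :
    (∏ i ∈ Finset.Icc 1 k, ∏ j ∈ Finset.Icc 1 k,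
        Real.cos (((i : ℝ) - (j : ℝ)) * dlt k - dlt k / 2) ^ 4 /
          Real.cos (((i : ℝ) - (j : ℝ)) * dlt k) ^ 4)
      = Real.exp (Tsum k) := by
  have hδ := dlt_pos hk
  have habs0 : |(0:ℝ)| ≤ dlt k / 2 := by rw [abs_zero]; linarith
  have habsm : |-(dlt k / 2)| ≤ dlt k / 2 := by rw [abs_neg, abs_of_pos (by linarith)]
  have habsp : |dlt k / 2| ≤ dlt k / 2 := by rw [abs_of_pos (by linarith)]
  have hsq3 : (0:ℝ) < Real.sqrt 3 / 2 := by positivity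
  -- positivity of the cosines
  have hcm : ∀ i ∈ Icc 1 k, ∀ j ∈ Icc 1 k,
      0 < Real.cos (((i:ℝ) - (j:ℝ)) * dlt k - dlt k / 2) := by
    intro i hi j hj
    have := cos_shift_ge hk hi hj (-(dlt k / 2)) habsm
    rw [← sub_eq_add_neg] at this
    linarith
  have hcp : ∀ i ∈ Icc 1 k, ∀ j ∈ Icc 1 k,
      0 < Real.cos (((i:ℝ) - (j:ℝ)) * dlt k + dlt k / 2) := by
    intro i hi j hj
    have := cos_shift_ge hk hi hj (dlt k / 2) habsp
    linarith
  have hc : ∀ i ∈ Icc 1 k, ∀ j ∈ Icc 1 k,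
      0 < Real.cos (((i:ℝ) - (j:ℝ)) * dlt k) := by
    intro i hi j hj
    have := cos_shift_ge hk hi hj 0 habs0
    rw [add_zero] at this
    linarith
  -- step A : product equals exp of sum of logs
  have stepA : (∏ i ∈ Finset.Icc 1 k, ∏ j ∈ Finset.Icc 1 k,
        Real.cos (((i : ℝ) - (j : ℝ)) * dlt k - dlt k / 2) ^ 4 /
          Real.cos (((i : ℝ) - (j : ℝ)) * dlt k) ^ 4)
      = Real.exp (∑ i ∈ Icc 1 k, ∑ j ∈ Icc 1 k,
          (4 * Real.log (Real.cos (((i:ℝ) - (j:ℝ)) * dlt k - dlt k / 2))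
            - 4 * Real.log (Real.cos (((i:ℝ) - (j:ℝ)) * dlt k)))) := by
    rw [Real.exp_sum]
    apply Finset.prod_congr rfl
    intro i hi
    rw [Real.exp_sum]
    apply Finset.prod_congr rfl
    intro j hj
    have e1 : Real.exp (4 * Real.log (Real.cos (((i:ℝ) - (j:ℝ)) * dlt k - dlt k / 2)))
        = Real.cos (((i:ℝ) - (j:ℝ)) * dlt k - dlt k / 2) ^ 4 := by
      rw [show (4:ℝ) = ((4:ℕ):ℝ) by norm_num, Real.exp_nat_mul,
        Real.exp_log (hcm i hi j hj)]
    have e2 : Real.exp (4 * Real.log (Real.cos (((i:ℝ) - (j:ℝ)) * dlt k)))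
        = Real.cos (((i:ℝ) - (j:ℝ)) * dlt k) ^ 4 := by
      rw [show (4:ℝ) = ((4:ℕ):ℝ) by norm_num, Real.exp_nat_mul,
        Real.exp_log (hc i hi j hj)]
    rw [Real.exp_sub, e1, e2]
  rw [stepA]
  congr 1
  -- step B : symmetrize
  have swap : ∑ i ∈ Icc 1 k, ∑ j ∈ Icc 1 k,
        2 * Real.log (Real.cos (((i:ℝ) - (j:ℝ)) * dlt k - dlt k / 2))
      = ∑ i ∈ Icc 1 k, ∑ j ∈ Icc 1 k,
        2 * Real.log (Real.cos (((i:ℝ) - (j:ℝ)) * dlt k + dlt k / 2)) := by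
    rw [Finset.sum_comm]
    apply Finset.sum_congr rfl
    intro i _
    apply Finset.sum_congr rfl
    intro j _
    congr 1
    rw [show ((j:ℝ) - (i:ℝ)) * dlt k - dlt k / 2
        = -((((i:ℝ) - (j:ℝ)) * dlt k + dlt k / 2)) by ring, Real.cos_neg]
  have expand : ∀ i ∈ Icc 1 k, ∀ j ∈ Icc 1 k,
      (4 * Real.log (Real.cos (((i:ℝ) - (j:ℝ)) * dlt k - dlt k / 2))
        - 4 * Real.log (Real.cos (((i:ℝ) - (j:ℝ)) * dlt k)))
      = 2 * Real.log (Real.cos (((i:ℝ) - (j:ℝ)) * dlt k - dlt k / 2))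
        + (2 * Real.log (Real.cos (((i:ℝ) - (j:ℝ)) * dlt k - dlt k / 2))
          - 4 * Real.log (Real.cos (((i:ℝ) - (j:ℝ)) * dlt k))) := by
    intro i _ j _; ring
  have expand2 : ∀ i ∈ Icc 1 k, ∀ j ∈ Icc 1 k,
      2 * Real.log (1 - Real.sin (dlt k / 2) ^ 2 / Real.cos (((i:ℝ) - (j:ℝ)) * dlt k) ^ 2)
      = 2 * Real.log (Real.cos (((i:ℝ) - (j:ℝ)) * dlt k + dlt k / 2))
        + (2 * Real.log (Real.cos (((i:ℝ) - (j:ℝ)) * dlt k - dlt k / 2))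
          - 4 * Real.log (Real.cos (((i:ℝ) - (j:ℝ)) * dlt k))) := by
    intro i hi j hj
    have h1 := hcm i hi j hj
    have h2 := hcp i hi j hj
    have h3 := hc i hi j hj
    have hmc := cos_mul_cos (((i:ℝ) - (j:ℝ)) * dlt k) (dlt k / 2)
    have hpos : 0 < Real.cos (((i:ℝ) - (j:ℝ)) * dlt k) ^ 2 - Real.sin (dlt k / 2) ^ 2 := by
      rw [← hmc]; positivity
    have harg : 1 - Real.sin (dlt k / 2) ^ 2 / Real.cos (((i:ℝ) - (j:ℝ)) * dlt k) ^ 2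
        = (Real.cos (((i:ℝ) - (j:ℝ)) * dlt k) ^ 2 - Real.sin (dlt k / 2) ^ 2)
          / Real.cos (((i:ℝ) - (j:ℝ)) * dlt k) ^ 2 := by
      rw [one_sub_div (pow_pos h3 2).ne']
    rw [harg, Real.log_div (ne_of_gt hpos) (by positivity), ← hmc,
      Real.log_mul (ne_of_gt h1) (ne_of_gt h2)]
    rw [show Real.cos (((i:ℝ) - (j:ℝ)) * dlt k) ^ 2
        = Real.cos (((i:ℝ) - (j:ℝ)) * dlt k) * Real.cos (((i:ℝ) - (j:ℝ)) * dlt k) by ring,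
      Real.log_mul (ne_of_gt h3) (ne_of_gt h3)]
    ring
  rw [Finset.sum_congr rfl (fun i hi => Finset.sum_congr rfl (fun j hj => expand i hi j hj))]
  unfold Tsum
  rw [Finset.sum_congr rfl (fun i hi => Finset.sum_congr rfl (fun j hj => expand2 i hi j hj))]
  simp only [Finset.sum_add_distrib]
  rw [swap]

set_option maxHeartbeats 1000000 in
lemma err_bound {k : ℕ} (hk : 1 ≤ k) :
    |Tsum k + dlt k ^ 2 / 2 * sig k| ≤ π ^ 4 / (k:ℝ) ^ 2 := by
  have hδ := dlt_pos hk
  have hle := dlt_le hk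
  have hpi := Real.pi_pos
  have hpl : π < 3.15 := Real.pi_lt_d2
  have hs := sin_half_lt hk
  have hk0 : (0:ℝ) < (k:ℝ) := by exact_mod_cast hk
  have key : Tsum k + dlt k ^ 2 / 2 * sig k
      = ∑ i ∈ Icc 1 k, ∑ j ∈ Icc 1 k,
          (2 * Real.log (1 - Real.sin (dlt k / 2) ^ 2
              / Real.cos (((i:ℝ) - (j:ℝ)) * dlt k) ^ 2)
            + dlt k ^ 2 / 2 * (1 / Real.cos (((i:ℝ) - (j:ℝ)) * dlt k) ^ 2)) := by
    unfold Tsum sig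
    rw [Finset.mul_sum, ← Finset.sum_add_distrib]
    apply Finset.sum_congr rfl
    intro i _
    rw [Finset.mul_sum, ← Finset.sum_add_distrib]
  have bound : ∀ i ∈ Icc 1 k, ∀ j ∈ Icc 1 k,
      |2 * Real.log (1 - Real.sin (dlt k / 2) ^ 2
          / Real.cos (((i:ℝ) - (j:ℝ)) * dlt k) ^ 2)
        + dlt k ^ 2 / 2 * (1 / Real.cos (((i:ℝ) - (j:ℝ)) * dlt k) ^ 2)| ≤ dlt k ^ 4 := by
    intro i hi j hj
    have hcge : Real.sqrt 3 / 2 ≤ Real.cos (((i:ℝ) - (j:ℝ)) * dlt k) := by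
      have := cos_shift_ge hk hi hj 0 (by rw [abs_zero]; linarith)
      rwa [add_zero] at this
    set c := Real.cos (((i:ℝ) - (j:ℝ)) * dlt k) with hcdef
    set s := Real.sin (dlt k / 2) with hsdef
    obtain ⟨hu2, hu0, hu3⟩ := one_sub_u_pos hk hcge
    have hc0 : (0:ℝ) < c := by nlinarith [sqrt3_gt]
    have hc2 : (3:ℝ)/4 ≤ c ^ 2 := by
      nlinarith [Real.sq_sqrt (by norm_num : (3:ℝ) ≥ 0), sqrt3_gt]
    have habs := Real.abs_log_sub_add_sum_range_le
      (x := s ^ 2 / c ^ 2) (by rw [abs_of_nonneg hu0]; linarith) 1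
    simp only [Finset.sum_range_one, pow_one, Nat.cast_one] at habs
    rw [abs_of_nonneg hu0] at habs
    norm_num at habs
    have hX : |s ^ 2 / c ^ 2 + Real.log (1 - s ^ 2 / c ^ 2)| ≤ 2 * (s ^ 2 / c ^ 2) ^ 2 := by
      refine habs.trans ?_
      rw [div_le_iff₀ (by linarith)]
      nlinarith [sq_nonneg (s^2/c^2)]
    have hsleft : dlt k / 2 - (dlt k / 2) ^ 3 / 4 < s :=
      by nlinarith [Real.sin_gt_sub_cube (x := dlt k / 2) (by linarith), pow_pos hδ 3]
    have hsq : s ^ 2 ≤ (dlt k / 2) ^ 2 := pow_le_pow_left₀ hs.1.le hs.2.le 2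
    have hsub1 : 0 ≤ dlt k ^ 2 / 2 - 2 * s ^ 2 := by nlinarith [hsq]
    have ht1 : dlt k / 2 ≤ 1 := by linarith
    have hb0 : 0 < dlt k / 2 - (dlt k / 2) ^ 3 / 4 := by nlinarith
    have hs2 : (dlt k / 2 - (dlt k / 2) ^ 3 / 4) ^ 2 < s ^ 2 :=
      pow_lt_pow_left₀ hsleft hb0.le (by norm_num)
    have hsub2 : dlt k ^ 2 / 2 - 2 * s ^ 2 ≤ dlt k ^ 4 / 16 := by
      nlinarith [hs2, pow_nonneg hδ.le 6]
    have hterm : 2 * Real.log (1 - s ^ 2 / c ^ 2) + dlt k ^ 2 / 2 * (1 / c ^ 2)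
        = 2 * (s ^ 2 / c ^ 2 + Real.log (1 - s ^ 2 / c ^ 2))
          + (dlt k ^ 2 / 2 - 2 * s ^ 2) / c ^ 2 := by
      field_simp
      ring
    rw [hterm]
    have hY : |(dlt k ^ 2 / 2 - 2 * s ^ 2) / c ^ 2| ≤ dlt k ^ 4 / 12 := by
      rw [abs_of_nonneg (div_nonneg hsub1 (by positivity))]
      rw [div_le_iff₀ (by positivity)]
      nlinarith [pow_pos hδ 4]
    calc |2 * (s ^ 2 / c ^ 2 + Real.log (1 - s ^ 2 / c ^ 2))
          + (dlt k ^ 2 / 2 - 2 * s ^ 2) / c ^ 2|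
        ≤ |2 * (s ^ 2 / c ^ 2 + Real.log (1 - s ^ 2 / c ^ 2))|
          + |(dlt k ^ 2 / 2 - 2 * s ^ 2) / c ^ 2| := abs_add_le _ _
      _ ≤ dlt k ^ 4 := by
          rw [abs_mul]
          have h2 : |(2:ℝ)| = 2 := by norm_num
          rw [h2]
          nlinarith [hX, hY, hu3, hu0, abs_nonneg (s ^ 2 / c ^ 2 + Real.log (1 - s ^ 2 / c ^ 2))]
  rw [key]
  calc |∑ i ∈ Icc 1 k, ∑ j ∈ Icc 1 k,
          (2 * Real.log (1 - Real.sin (dlt k / 2) ^ 2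
              / Real.cos (((i:ℝ) - (j:ℝ)) * dlt k) ^ 2)
            + dlt k ^ 2 / 2 * (1 / Real.cos (((i:ℝ) - (j:ℝ)) * dlt k) ^ 2))|
      ≤ ∑ i ∈ Icc 1 k, ∑ j ∈ Icc 1 k,
          |2 * Real.log (1 - Real.sin (dlt k / 2) ^ 2
              / Real.cos (((i:ℝ) - (j:ℝ)) * dlt k) ^ 2)
            + dlt k ^ 2 / 2 * (1 / Real.cos (((i:ℝ) - (j:ℝ)) * dlt k) ^ 2)| := by
        refine (Finset.abs_sum_le_sum_abs _ _).trans ?_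
        apply Finset.sum_le_sum
        intro i _
        exact Finset.abs_sum_le_sum_abs _ _
    _ ≤ ∑ i ∈ Icc 1 k, ∑ j ∈ Icc 1 k, dlt k ^ 4 := by
        apply Finset.sum_le_sum
        intro i hi
        apply Finset.sum_le_sum
        intro j hj
        exact bound i hi j hj
    _ = (k:ℝ) * ((k:ℝ) * dlt k ^ 4) := by
        rw [Finset.sum_const, Finset.sum_const, Nat.card_Icc]
        simp [nsmul_eq_mul]
    _ = π ^ 4 / (1296 * (k:ℝ) ^ 2) := by
        unfold dlt
        field_simp
        ring
    _ ≤ π ^ 4 / (k:ℝ) ^ 2 := by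
        apply div_le_div_of_nonneg_left (by positivity) (by positivity)
        nlinarith

lemma Tsum_tendsto : Tendsto Tsum atTop (nhds (Real.log (Real.sqrt 3 / 2))) := by
  have herr : Tendsto (fun k : ℕ => Tsum k + dlt k ^ 2 / 2 * sig k) atTop (nhds 0) := by
    apply squeeze_zero_norm' (a := fun k : ℕ => π ^ 4 / (k:ℝ) ^ 2)
    · filter_upwards [eventually_ge_atTop 1] with k hk
      rw [Real.norm_eq_abs]
      exact err_bound hk
    · have h1 := tendsto_const_div_atTop_nhds_zero_nat (π ^ 4)
      have h2 := tendsto_const_div_atTop_nhds_zero_nat (1:ℝ)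
      have h3 := h1.mul h2
      rw [mul_zero] at h3
      refine h3.congr ?_
      intro k
      rw [div_mul_div_comm, mul_one, sq]
  have h1 := riemann.const_mul (-1/2 : ℝ)
  have h3 := h1.add herr
  have hfun : (fun k : ℕ => -1/2 * (dlt k ^ 2 * sig k) + (Tsum k + dlt k ^ 2 / 2 * sig k))
      = Tsum := by
    funext k
    ring
  rw [hfun] at h3
  have hval : -1/2 * (-2 * Real.log (Real.sqrt 3 / 2)) + 0 = Real.log (Real.sqrt 3 / 2) := by
    ring
  rwa [hval] at h3

theorem stmt14 :
    Filter.Tendsto (fun k : ℕ =>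
      ∏ i ∈ Finset.Icc 1 k, ∏ j ∈ Finset.Icc 1 k,
        Real.cos (((i : ℝ) - (j : ℝ)) * dlt k - dlt k / 2) ^ 4 /
          Real.cos (((i : ℝ) - (j : ℝ)) * dlt k) ^ 4)
      Filter.atTop (nhds (Real.sqrt 3 / 2)) := by
  have hT := Tsum_tendsto
  have hpos : (0:ℝ) < Real.sqrt 3 / 2 := by positivity
  have hexp := (Real.continuous_exp.tendsto _).comp hT
  rw [Real.exp_log hpos] at hexp
  apply hexp.congr'
  filter_upwards [eventually_ge_atTop 1] with k hk
  exact (prod_eq hk).symm
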